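/- Suppose n ≥ 1, e ≥ 1, and |S(n,e)| = p is a prime number. Then: (i) every PL(n,e)-code C is periodic with period p in every direction, i.e., C + p·e_i = C for every standard basis vector e_i of ℤ^n; and (ii) there exists a PL(n,e)-code if and only if there exists a PL(n,e)-code that is a subgroup of the additive group ℤ^n (a linear PL(n,e)-code). -/

import Mathlib

/-- The Lee sphere `S(n,e) = {x ∈ ℤ^n : |x_1| + ⋯ + |x_n| ≤ e}`. -/
def LeeSphere (n e : ℕ) : Set (Fin n → ℤ) :=
  {x | (∑ i, |x i|) ≤ (e : ℤ)}

/-- A `PL(n,e)`-code: every point of `ℤ^n` is within Lee distance `e` of exactly one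
codeword. -/
def IsPLCode (n e : ℕ) (C : Set (Fin n → ℤ)) : Prop :=
  ∀ x : Fin n → ℤ, ∃! c, c ∈ C ∧ (∑ i, |x i - c i|) ≤ (e : ℤ)

namespace PLAux

open Finset
open scoped Classical

noncomputable section

lemma leeSphere_finite (n e : ℕ) : (LeeSphere n e).Finite := by
  apply (Set.finite_Icc (fun _ : Fin n => -(e : ℤ)) (fun _ => (e : ℤ))).subset
  intro x hx
  have hx' : (∑ i, |x i|) ≤ (e : ℤ) := hx
  have habs : ∀ i, |x i| ≤ (e : ℤ) := fun i =>
    le_trans (Finset.single_le_sum (fun j _ => abs_nonneg (x j)) (mem_univ i)) hx'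
  constructor
  · intro i; exact neg_le_of_abs_le (habs i)
  · intro i; exact le_of_abs_le (habs i)

/-- The Lee sphere as a Finset. -/
def sphB (n e : ℕ) : Finset (Fin n → ℤ) := (leeSphere_finite n e).toFinset

lemma mem_sphB {n e : ℕ} {b : Fin n → ℤ} : b ∈ sphB n e ↔ (∑ i, |b i|) ≤ (e : ℤ) := by
  rw [sphB, Set.Finite.mem_toFinset]; rfl

lemma zero_mem_sphB (n e : ℕ) : (0 : Fin n → ℤ) ∈ sphB n e := by
  rw [mem_sphB]; simp

lemma sum_abs_single {n : ℕ} (i : Fin n) (k : ℤ) : (∑ j, |Pi.single i k j|) = |k| := by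
  rw [Finset.sum_eq_single i]
  · simp
  · intro j _ hj; simp [Pi.single_eq_of_ne hj]
  · simp

lemma single_mem_sphB {n e : ℕ} (he : 1 ≤ e) (i : Fin n) : Pi.single i (1 : ℤ) ∈ sphB n e := by
  rw [mem_sphB, sum_abs_single]
  simpa using (by exact_mod_cast he : (1 : ℤ) ≤ (e : ℤ))

lemma sphB_card {n e p : ℕ} (hcard : (LeeSphere n e).ncard = p) : (sphB n e).card = p := by
  rw [sphB, ← Set.ncard_eq_toFinset_card _ (leeSphere_finite n e)]; exact hcard

lemma two_e_lt_p {n e p : ℕ} (hn : 1 ≤ n) (hcard : (LeeSphere n e).ncard = p) :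
    2 * e < p := by
  have i0 : Fin n := ⟨0, hn⟩
  have hinj : ∀ a ∈ Finset.Icc (-(e : ℤ)) e, ∀ b ∈ Finset.Icc (-(e : ℤ)) e,
      (Pi.single i0 a : Fin n → ℤ) = Pi.single i0 b → a = b := by
    intro a _ b _ h
    have := congrFun h i0
    simpa using this
  have hmap : ∀ a ∈ Finset.Icc (-(e : ℤ)) e, Pi.single i0 a ∈ sphB n e := by
    intro a ha
    rw [mem_sphB, sum_abs_single]
    rw [Finset.mem_Icc] at ha
    exact abs_le.mpr ha
  have hle := Finset.card_le_card_of_injOn _ hmap hinj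
  rw [sphB_card hcard] at hle
  have : (Finset.Icc (-(e : ℤ)) e).card = 2 * e + 1 := by
    rw [Int.card_Icc]
    omega
  omega

/-! ### The functional `Phi` on the group algebra -/

variable {n p : ℕ}

/-- Evaluation of a group-algebra element against a weight function. -/
def Phi (W : (Fin n → ℤ) → ZMod p) (α : AddMonoidAlgebra (ZMod p) (Fin n → ℤ)) : ZMod p :=
  α.coeff.sum fun y a => a * W y

lemma Phi_zero (W : (Fin n → ℤ) → ZMod p) : Phi W 0 = 0 := by
  simp [Phi]

lemma Phi_single (W : (Fin n → ℤ) → ZMod p) (y : Fin n → ℤ) (a : ZMod p) :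
    Phi W (AddMonoidAlgebra.single y a) = a * W y :=
  Finsupp.sum_single_index (by simp)

lemma Phi_add (W : (Fin n → ℤ) → ZMod p) (α α' : AddMonoidAlgebra (ZMod p) (Fin n → ℤ)) :
    Phi W (α + α') = Phi W α + Phi W α' :=
  Finsupp.sum_add_index' (by simp) (fun y b₁ b₂ => add_mul b₁ b₂ (W y))

lemma Phi_finsum (W : (Fin n → ℤ) → ZMod p) {ι : Type*} (s : Finset ι)
    (f : ι → AddMonoidAlgebra (ZMod p) (Fin n → ℤ)) :
    Phi W (∑ b ∈ s, f b) = ∑ b ∈ s, Phi W (f b) := by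
  classical
  induction s using Finset.induction_on with
  | empty => simp [Phi_zero]
  | insert a s' h ih =>
                   rw [Finset.sum_insert h, Phi_add, ih, Finset.sum_insert h]

lemma Phi_zeroW (α : AddMonoidAlgebra (ZMod p) (Fin n → ℤ)) :
    Phi (fun _ => (0 : ZMod p)) α = 0 := by
  simp [Phi]

lemma Phi_single_mul (W : (Fin n → ℤ) → ZMod p) (b : Fin n → ℤ) (r : ZMod p)
    (α : AddMonoidAlgebra (ZMod p) (Fin n → ℤ)) :
    Phi W (AddMonoidAlgebra.single b r * α) = r * Phi (fun y => W (b + y)) α := by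
  induction α using AddMonoidAlgebra.induction_linear with
  | zero => simp [Phi_zero]
  | add f g hf hg => rw [mul_add, Phi_add, hf, hg, Phi_add, mul_add]
  | single y a =>
      rw [AddMonoidAlgebra.single_mul_single, Phi_single, Phi_single]
      ring

lemma Phi_sum_W {ι : Type*} (s : Finset ι) (W : ι → (Fin n → ℤ) → ZMod p)
    (α : AddMonoidAlgebra (ZMod p) (Fin n → ℤ)) :
    (∑ b ∈ s, Phi (W b) α) = Phi (fun y => ∑ b ∈ s, W b y) α := by
  simp only [Phi, Finsupp.sum, Finset.mul_sum]
  rw [Finset.sum_comm]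

/-! ### Periodicity -/

lemma Phi_beta_mul {n e : ℕ} {p : ℕ} (W : (Fin n → ℤ) → ZMod p)
    (α : AddMonoidAlgebra (ZMod p) (Fin n → ℤ)) :
    Phi W ((∑ b ∈ sphB n e, AddMonoidAlgebra.single b (1 : ZMod p)) * α)
      = Phi (fun y => ∑ b ∈ sphB n e, W (b + y)) α := by
  rw [Finset.sum_mul, Phi_finsum]
  have : ∀ b ∈ sphB n e,
      Phi W (AddMonoidAlgebra.single b (1 : ZMod p) * α)
        = Phi (fun y => W (b + y)) α := by
    intro b _
    rw [Phi_single_mul, one_mul]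
  rw [Finset.sum_congr rfl this, Phi_sum_W]

lemma all_or_nothing {n e p : ℕ} (he : 1 ≤ e) (hp : p.Prime)
    (hcard : (LeeSphere n e).ncard = p)
    {C : Set (Fin n → ℤ)} (hC : IsPLCode n e C) (x : Fin n → ℤ) :
    ∀ b ∈ sphB n e, ∀ b' ∈ sphB n e, ((x - p • b ∈ C) ↔ (x - p • b' ∈ C)) := by
  haveI : Fact p.Prime := ⟨hp⟩
  haveI hch : CharP (AddMonoidAlgebra (ZMod p) (Fin n → ℤ)) p := by
    apply charP_of_injective_algebraMap (R := ZMod p)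
    rw [AddMonoidAlgebra.coe_algebraMap]
    exact (AddMonoidAlgebra.single_right_injective (m := 0)).comp (fun a b h => h)
  set B := sphB n e with hB
  set W : (Fin n → ℤ) → ZMod p := fun y => if x - y ∈ C then 1 else 0 with hW
  -- the perfect-code property in averaged form
  have hper : ∀ z : Fin n → ℤ, (∑ b ∈ B, W (b + z)) = 1 := by
    intro z
    obtain ⟨c, ⟨hcC, hcd⟩, huniq⟩ := hC (x - z)
    have hfil : (B.filter fun b => x - (b + z) ∈ C) = {x - z - c} := by
      ext b
      simp only [Finset.mem_filter, Finset.mem_singleton]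
      constructor
      · rintro ⟨hbB, hbC⟩
        have hc' : (x - z - b) ∈ C ∧ (∑ i, |(x - z) i - (x - z - b) i|) ≤ (e : ℤ) := by
          constructor
          · have : x - (b + z) = x - z - b := by ring
            rwa [this] at hbC
          · have : ∀ i, (x - z) i - (x - z - b) i = b i := by
              intro i; simp only [Pi.sub_apply]; ring
            simp only [this]
            exact mem_sphB.mp hbB
        have := huniq _ hc'
        have hb : b = x - z - c := by rw [← this]; ring
        exact hb
      · rintro rfl
        constructor
        · rw [mem_sphB]
          have : ∀ i, (x - z - c) i = (x - z) i - c i := by intro i; simp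
          simp only [this]
          exact hcd
        · have : x - (x - z - c + z) = c := by ring
          rwa [this]
    have : (∑ b ∈ B, W (b + z)) = ((B.filter fun b => x - (b + z) ∈ C).card : ZMod p) := by
      rw [hW]
      simp only []
      rw [Finset.sum_boole]
    rw [this, hfil]
    simp
  set β : AddMonoidAlgebra (ZMod p) (Fin n → ℤ) :=
    ∑ b ∈ B, AddMonoidAlgebra.single b (1 : ZMod p) with hβ
  have h1 : ∀ α, Phi W (β * α) = Phi (fun _ => (1 : ZMod p)) α := by
    intro α
    rw [hβ, Phi_beta_mul]
    congr 1
    exact funext hper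
  have h0 : ∀ α, Phi (fun _ => (1 : ZMod p)) (β * α) = 0 := by
    intro α
    rw [hβ, Phi_beta_mul]
    have : (fun _ : Fin n → ℤ => ∑ _b ∈ sphB n e, (1 : ZMod p)) = fun _ => 0 := by
      funext y
      rw [Finset.sum_const, ← hB, sphB_card hcard]
      simp
    rw [this, Phi_zeroW]
  have hp2 : 2 ≤ p := hp.two_le
  have hsplit1 : β ^ p = β * β ^ (p - 1) := by
    calc β ^ p = β ^ (1 + (p - 1)) := by congr 1; omega
    _ = β ^ 1 * β ^ (p - 1) := pow_add β 1 (p - 1)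
    _ = β * β ^ (p - 1) := by rw [pow_one]
  have hsplit2 : β ^ (p - 1) = β * β ^ (p - 2) := by
    calc β ^ (p - 1) = β ^ (1 + (p - 2)) := by congr 1; omega
    _ = β ^ 1 * β ^ (p - 2) := pow_add β 1 (p - 2)
    _ = β * β ^ (p - 2) := by rw [pow_one]
  have hzero : Phi W (β ^ p) = 0 := by
    rw [hsplit1, h1, hsplit2, h0]
  have hfrob : β ^ p = ∑ b ∈ B, AddMonoidAlgebra.single (p • b) (1 : ZMod p) := by
    rw [hβ, sum_pow_char]
    exact Finset.sum_congr rfl fun b _ => by rw [AddMonoidAlgebra.single_pow, one_pow]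
  have hsum : (∑ b ∈ B, W (p • b)) = 0 := by
    rw [← hzero, hfrob, Phi_finsum]
    exact Finset.sum_congr rfl fun b _ => by rw [Phi_single, one_mul]
  -- counting
  set N := (B.filter fun b => x - p • b ∈ C).card with hN
  have hcast : (N : ZMod p) = 0 := by
    have hrfl : (∑ b ∈ B, W (p • b)) = ∑ b ∈ B, if x - p • b ∈ C then (1 : ZMod p) else 0 := rfl
    rw [hN, ← Finset.sum_boole, ← hrfl, hsum]
  have hdvd : p ∣ N := (ZMod.natCast_eq_zero_iff N p).mp hcast
  have hNle : N ≤ p := by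
    rw [hN, ← sphB_card (e := e) hcard, ← hB]
    exact Finset.card_filter_le _ _
  have hcases : N = 0 ∨ N = p := by
    rcases Nat.eq_zero_or_pos N with h | h
    · exact Or.inl h
    · exact Or.inr (le_antisymm hNle (Nat.le_of_dvd h hdvd))
  intro b hb b' hb'
  rcases hcases with h | h
  · have hempty : (B.filter fun b => x - p • b ∈ C) = ∅ :=
      Finset.card_eq_zero.mp (by rw [← hN]; exact h)
    have h1 : x - p • b ∉ C := fun hc =>
      (Finset.notMem_empty b) (hempty ▸ Finset.mem_filter.mpr ⟨hb, hc⟩)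
    have h2 : x - p • b' ∉ C := fun hc =>
      (Finset.notMem_empty b') (hempty ▸ Finset.mem_filter.mpr ⟨hb', hc⟩)
    exact iff_of_false h1 h2
  · have hall : (B.filter fun b => x - p • b ∈ C) = B := by
      apply Finset.eq_of_subset_of_card_le (Finset.filter_subset _ _)
      rw [← hN, h, ← sphB_card (e := e) hcard, hB]
    have h1 := (Finset.mem_filter.mp (hall ▸ hb)).2
    have h2 := (Finset.mem_filter.mp (hall ▸ hb')).2
    exact iff_of_true h1 h2

lemma smul_single_one {n : ℕ} (p : ℕ) (i : Fin n) :
    p • (Pi.single i (1 : ℤ) : Fin n → ℤ) = Pi.single i (p : ℤ) := by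
  funext j
  rcases eq_or_ne j i with rfl | hj
  · simp
  · simp [Pi.single_eq_of_ne hj]

lemma periodic_single {n e p : ℕ} (he : 1 ≤ e) (hp : p.Prime)
    (hcard : (LeeSphere n e).ncard = p)
    {C : Set (Fin n → ℤ)} (hC : IsPLCode n e C) (i : Fin n) (x : Fin n → ℤ) :
    x ∈ C ↔ x + Pi.single i (p : ℤ) ∈ C := by
  have h := all_or_nothing he hp hcard hC (x + Pi.single i (p : ℤ))
    (Pi.single i (1 : ℤ)) (single_mem_sphB he i) 0 (zero_mem_sphB n e)
  have e1 : x + Pi.single i (p : ℤ) - p • (Pi.single i (1 : ℤ)) = x := by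
    rw [smul_single_one]; ring
  have e2 : x + Pi.single i (p : ℤ) - p • (0 : Fin n → ℤ) = x + Pi.single i (p : ℤ) := by
    simp
  rw [e1, e2] at h
  exact h

/-- Full `p ℤ^n`-periodicity. -/
lemma periodic_all {n e p : ℕ} (he : 1 ≤ e) (hp : p.Prime)
    (hcard : (LeeSphere n e).ncard = p)
    {C : Set (Fin n → ℤ)} (hC : IsPLCode n e C) (v x : Fin n → ℤ) :
    x ∈ C ↔ x + p • v ∈ C := by
  set P : AddSubgroup (Fin n → ℤ) :=
    { carrier := {w | ∀ y, y ∈ C ↔ y + w ∈ C}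
      zero_mem' := by intro y; simp
      add_mem' := by
        intro a b ha hb y
        rw [ha y, hb (y + a), add_assoc]
      neg_mem' := by
        intro a ha y
        have := ha (y + -a)
        rw [iff_comm] at this
        simpa using this } with hP
  have hsingle : ∀ i : Fin n, Pi.single i (p : ℤ) ∈ P := by
    intro i y
    exact periodic_single he hp hcard hC i y
  have hv : p • v ∈ P := by
    have hrepr : p • v = ∑ i, (v i) • Pi.single i (p : ℤ) := by
      funext j
      rw [Finset.sum_apply]
      have : ∀ i : Fin n, (v i • (Pi.single i (p : ℤ) : Fin n → ℤ)) j
          = v i * (Pi.single i (p : ℤ) : Fin n → ℤ) j := by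
        intro i; simp
      rw [Finset.sum_congr rfl fun i _ => this i]
      rw [Finset.sum_eq_single j]
      · simp [mul_comm]
      · intro i _ hij
        rw [show (Pi.single i (p : ℤ) : Fin n → ℤ) j = 0 from Pi.single_eq_of_ne (Ne.symm hij) _,
          mul_zero]
      · intro hj; exact absurd (Finset.mem_univ j) hj
    rw [hrepr]
    exact AddSubgroup.sum_mem P fun i _ => AddSubgroup.zsmul_mem P (hsingle i) (v i)
  exact hv x

/-! ### Character sums for part (ii) -/

/-- The dot product pairing on `(ZMod p)^n`. -/
def dotp {n p : ℕ} (a g : Fin n → ZMod p) : ZMod p := ∑ i, a i * g i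

lemma dotp_add_right {n p : ℕ} (a g g' : Fin n → ZMod p) :
    dotp a (g + g') = dotp a g + dotp a g' := by
  simp [dotp, mul_add, Finset.sum_add_distrib]

lemma addChar_sum {M : Type*} [AddCommMonoid M] (ψ : AddChar M ℂ) {ι : Type*}
    (s : Finset ι) (f : ι → M) : ψ (∑ i ∈ s, f i) = ∏ i ∈ s, ψ (f i) := by
  classical
  induction s using Finset.induction_on with
  | empty => simp
  | insert a s' h ih =>
      rw [Finset.sum_insert h, AddChar.map_add_eq_mul, ih, Finset.prod_insert h]

lemma sum_zmod_pow_val {p : ℕ} [NeZero p] (hp : p.Prime) {ζ : ℂ} (hζ : IsPrimitiveRoot ζ p) :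
    ∑ t : ZMod p, ζ ^ (t.val) = 0 := by
  rw [← hζ.geom_sum_eq_zero hp.one_lt]
  apply Finset.sum_nbij' (fun t : ZMod p => t.val) (fun k : ℕ => (k : ZMod p))
  · intro t _; exact Finset.mem_range.mpr (ZMod.val_lt t)
  · intro k _; exact Finset.mem_univ _
  · intro t _; exact ZMod.natCast_rightInverse t
  · intro k hk; exact ZMod.val_cast_of_lt (Finset.mem_range.mp hk)
  · intro t _; rfl

lemma sum_char_zero {p : ℕ} [NeZero p] (hp : p.Prime) {ζ : ℂ} (hζ : IsPrimitiveRoot ζ p)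
    (ψ : AddChar (ZMod p) ℂ) (hψ : ∀ t : ZMod p, ψ t = ζ ^ t.val) :
    ∑ t : ZMod p, ψ t = 0 := by
  rw [Finset.sum_congr rfl fun t _ => hψ t]
  exact sum_zmod_pow_val hp hζ

lemma sum_char_dot {n p : ℕ} [NeZero p] (hp : p.Prime) (ψ : AddChar (ZMod p) ℂ)
    (hψ0 : ∑ t : ZMod p, ψ t = 0) {a : Fin n → ZMod p} (ha : a ≠ 0) :
    ∑ g : Fin n → ZMod p, ψ (dotp a g) = 0 := by
  haveI : Fact p.Prime := ⟨hp⟩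
  obtain ⟨i0, hi0⟩ := Function.ne_iff.mp ha
  have hform : ∀ g : Fin n → ZMod p, ψ (dotp a g) = ∏ i, ψ (a i * g i) := fun g =>
    addChar_sum ψ Finset.univ _
  have h1 : ∑ g : Fin n → ZMod p, ψ (dotp a g)
      = ∑ g ∈ Fintype.piFinset (fun _ : Fin n => (Finset.univ : Finset (ZMod p))),
          ∏ i, ψ (a i * g i) := by
    rw [Fintype.piFinset_univ]
    exact Finset.sum_congr rfl fun g _ => hform g
  rw [h1, ← Finset.prod_univ_sum (fun _ : Fin n => (Finset.univ : Finset (ZMod p)))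
    (fun i t => ψ (a i * t))]
  apply Finset.prod_eq_zero (Finset.mem_univ i0)
  have hbij : Function.Bijective (fun t : ZMod p => a i0 * t) :=
    mulLeft_bijective₀ _ (by simpa using hi0)
  rw [Fintype.sum_bijective _ hbij (fun t => ψ (a i0 * t)) (fun t => ψ t) (fun t => rfl)]
  exact hψ0

lemma counts_eq_one {p : ℕ} [NeZero p] (hp : p.Prime) {ζ : ℂ} (hζ : IsPrimitiveRoot ζ p)
    (N : ZMod p → ℕ) (hsum : ∑ t, N t = p) (hzero : ∑ t : ZMod p, (N t : ℂ) * ζ ^ t.val = 0) :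
    ∀ t, N t = 1 := by
  haveI : Fact p.Prime := ⟨hp⟩
  classical
  set f : Polynomial ℚ := ∑ t : ZMod p, Polynomial.C (N t : ℚ) * Polynomial.X ^ (t.val) with hf
  have hev : Polynomial.aeval ζ f = 0 := by
    rw [hf, map_sum]
    rw [Finset.sum_congr rfl (fun t _ => by
      rw [map_mul, Polynomial.aeval_C, map_pow, Polynomial.aeval_X]
      try norm_num)]
    exact hzero
  have hmin : minpoly ℚ ζ = Polynomial.cyclotomic p ℚ :=
    (Polynomial.cyclotomic_eq_minpoly_rat hζ hp.pos).symm
  have hdvd : Polynomial.cyclotomic p ℚ ∣ f := hmin ▸ minpoly.dvd ℚ ζ hev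
  obtain ⟨q, hq⟩ := hdvd
  have hdegf : f.natDegree ≤ p - 1 := by
    rw [hf]
    refine le_trans (Polynomial.natDegree_sum_le _ _) ?_
    rw [Finset.fold_max_le]
    refine ⟨Nat.zero_le _, fun t _ => ?_⟩
    refine le_trans (Polynomial.natDegree_mul_le) ?_
    rw [Polynomial.natDegree_C, Polynomial.natDegree_X_pow]
    have := ZMod.val_lt t
    omega
  have hΦdeg : (Polynomial.cyclotomic p ℚ).natDegree = p - 1 := by
    rw [Polynomial.natDegree_cyclotomic, Nat.totient_prime hp]
  have hΦne : Polynomial.cyclotomic p ℚ ≠ 0 := Polynomial.cyclotomic_ne_zero p ℚ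
  have hqdeg : q.natDegree = 0 := by
    by_cases hq0 : q = 0
    · simp [hq0]
    · have hmul := Polynomial.natDegree_mul hΦne hq0
      rw [← hq, hΦdeg] at hmul
      have hp2 := hp.two_le
      omega
  obtain ⟨cst, hcst⟩ := Polynomial.natDegree_eq_zero.mp hqdeg
  have hcoeff : ∀ k, k < p → f.coeff k = cst := by
    intro k hk
    rw [hq, ← hcst, mul_comm, Polynomial.coeff_C_mul, Polynomial.cyclotomic_prime,
      Polynomial.finset_sum_coeff]
    have : ∀ i ∈ Finset.range p, (Polynomial.X ^ i : Polynomial ℚ).coeff k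
        = if k = i then 1 else 0 := by
      intro i _
      rw [Polynomial.coeff_X_pow]
    rw [Finset.sum_congr rfl this, Finset.sum_ite_eq (Finset.range p) k (fun _ => (1 : ℚ))]
    rw [if_pos (Finset.mem_range.mpr hk), mul_one]
  have hcoeff2 : ∀ t : ZMod p, (N t : ℚ) = cst := by
    intro t
    have hk := hcoeff t.val (ZMod.val_lt t)
    rw [hf, Polynomial.finset_sum_coeff] at hk
    have hterm : ∀ t' : ZMod p,
        (Polynomial.C (N t' : ℚ) * Polynomial.X ^ (t'.val)).coeff t.val
          = if t' = t then (N t' : ℚ) else 0 := by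
      intro t'
      rw [Polynomial.coeff_C_mul, Polynomial.coeff_X_pow]
      rcases eq_or_ne t' t with rfl | hne
      · simp
      · rw [if_neg hne, if_neg (fun h => hne (ZMod.val_injective p h.symm)), mul_zero]
    rw [Finset.sum_congr rfl (fun t' _ => hterm t'), Finset.sum_ite_eq' Finset.univ t] at hk
    rw [if_pos (Finset.mem_univ t)] at hk
    exact hk
  have hpcst : (p : ℚ) * cst = (p : ℚ) := by
    have hcast : (∑ t : ZMod p, ((N t : ℚ))) = (p : ℚ) := by
      rw [← Nat.cast_sum, hsum]
    rw [Finset.sum_congr rfl (fun t _ => hcoeff2 t), Finset.sum_const, Finset.card_univ,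
      ZMod.card] at hcast
    calc (p : ℚ) * cst = p • cst := (nsmul_eq_mul p cst).symm
    _ = (p : ℚ) := hcast
  have hcst1 : cst = 1 := by
    have hppos : (p : ℚ) ≠ 0 := Nat.cast_ne_zero.mpr hp.pos.ne'
    exact mul_left_cancel₀ hppos (hpcst.trans (mul_one (p : ℚ)).symm)
  intro t
  have := hcoeff2 t
  rw [hcst1] at this
  exact_mod_cast this

lemma exists_linear {n e p : ℕ} (hn : 1 ≤ n) (he : 1 ≤ e) (hp : p.Prime)
    (hcard : (LeeSphere n e).ncard = p) {C : Set (Fin n → ℤ)} (hC : IsPLCode n e C) :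
    ∃ H : AddSubgroup (Fin n → ℤ), IsPLCode n e (H : Set (Fin n → ℤ)) := by
  haveI : Fact p.Prime := ⟨hp⟩
  haveI : NeZero p := ⟨hp.pos.ne'⟩
  set π : (Fin n → ℤ) → (Fin n → ZMod p) := fun x i => ((x i : ℤ) : ZMod p) with hπ
  have hπadd : ∀ x y, π (x + y) = π x + π y := by
    intro x y; funext i; simp [hπ]
  have hπsub : ∀ x y, π (x - y) = π x - π y := by
    intro x y; funext i; simp [hπ]
  have habs_le : ∀ b : Fin n → ℤ, b ∈ sphB n e → ∀ i, |b i| ≤ (e : ℤ) := by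
    intro b hb i
    exact le_trans (Finset.single_le_sum (fun j _ => abs_nonneg (b j)) (Finset.mem_univ i))
      (mem_sphB.mp hb)
  have h2e : 2 * e < p := two_e_lt_p hn hcard
  have hinjB : ∀ b ∈ sphB n e, ∀ b' ∈ sphB n e, π b = π b' → b = b' := by
    intro b hb b' hb' hbb
    funext i
    have h1 : ((b i : ℤ) : ZMod p) = ((b' i : ℤ) : ZMod p) := congrFun hbb i
    have hd : (p : ℤ) ∣ b' i - b i := Int.ModEq.dvd ((ZMod.intCast_eq_intCast_iff _ _ _).mp h1)
    by_contra hne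
    have hne' : b' i - b i ≠ 0 := fun h => hne (by omega)
    have hle := Int.le_of_dvd (abs_pos.mpr hne') ((dvd_abs _ _).mpr hd)
    have habs : |b' i - b i| ≤ 2 * (e : ℤ) := by
      calc |b' i - b i| ≤ |b' i| + |b i| := abs_sub _ _
      _ ≤ (e : ℤ) + e := add_le_add (habs_le b' hb' i) (habs_le b hb i)
      _ = 2 * e := by ring
    have : (p : ℤ) ≤ 2 * (e : ℤ) := le_trans hle habs
    have : (2 * e : ℤ) < (p : ℤ) := by exact_mod_cast h2e
    omega
  have hval : ∀ g : Fin n → ZMod p, π (fun i => ((g i).val : ℤ)) = g := by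
    intro g; funext i
    show (((g i).val : ℤ) : ZMod p) = g i
    push_cast
    exact ZMod.natCast_rightInverse (g i)
  -- decomposition: existence
  have hex : ∀ g : Fin n → ZMod p, ∃ b ∈ sphB n e, ∃ c ∈ C, π b + π c = g := by
    intro g
    obtain ⟨c, ⟨hcC, hcd⟩, -⟩ := hC (fun i => ((g i).val : ℤ))
    refine ⟨(fun i => ((g i).val : ℤ)) - c, ?_, c, hcC, ?_⟩
    · rw [mem_sphB]
      have : ∀ i, ((fun i => ((g i).val : ℤ)) - c) i = ((g i).val : ℤ) - c i := fun i => rfl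
      simp only [this]
      exact hcd
    · rw [hπsub, sub_add_cancel]
      exact hval g
  have hsm : ∀ (w : Fin n → ℤ) (i : Fin n), ((p : ℕ) • w) i = (p : ℤ) * w i := by
    intro w i
    show (p : ℕ) • w i = (p : ℤ) * w i
    rw [nsmul_eq_mul]
  -- decomposition: uniqueness
  have huniq : ∀ b₁ ∈ sphB n e, ∀ b₂ ∈ sphB n e, ∀ c₁ ∈ C, ∀ c₂ ∈ C,
      π b₁ + π c₁ = π b₂ + π c₂ → b₁ = b₂ ∧ π c₁ = π c₂ := by
    intro b₁ hb₁ b₂ hb₂ c₁ hc₁ c₂ hc₂ heq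
    have hdvd : ∀ i, (p : ℤ) ∣ (b₂ i + c₂ i) - (b₁ i + c₁ i) := by
      intro i
      have h1 : ((b₁ i + c₁ i : ℤ) : ZMod p) = ((b₂ i + c₂ i : ℤ) : ZMod p) := by
        have := congrFun heq i
        have h2 : (b₁ i : ZMod p) + (c₁ i : ZMod p) = (b₂ i : ZMod p) + (c₂ i : ZMod p) := this
        push_cast
        exact h2
      exact Int.ModEq.dvd ((ZMod.intCast_eq_intCast_iff _ _ _).mp h1)
    set v : Fin n → ℤ := fun i => ((b₂ i + c₂ i) - (b₁ i + c₁ i)) / p with hv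
    have hpv : ∀ i, (p : ℤ) * v i = (b₂ i + c₂ i) - (b₁ i + c₁ i) := by
      intro i
      exact Int.mul_ediv_cancel' (hdvd i)
    have hc₂' : c₂ - (p : ℕ) • v ∈ C := by
      have h := (periodic_all he hp hcard hC (-v) c₂).mp hc₂
      have : c₂ + (p : ℕ) • (-v) = c₂ - (p : ℕ) • v := by
        rw [smul_neg]
        exact (sub_eq_add_neg c₂ _).symm
      rwa [this] at h
    obtain ⟨c₀, hc₀, hu⟩ := hC (b₁ + c₁)
    have e₁ : c₁ = c₀ := by
      apply hu
      refine ⟨hc₁, ?_⟩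
      have : ∀ i, (b₁ + c₁) i - c₁ i = b₁ i := fun i => by simp
      simp only [this]
      exact mem_sphB.mp hb₁
    have e₂ : c₂ - (p : ℕ) • v = c₀ := by
      apply hu
      refine ⟨hc₂', ?_⟩
      have : ∀ i, (b₁ + c₁) i - (c₂ - (p : ℕ) • v) i = b₂ i := by
        intro i
        have h1 := hpv i
        have h2 := hsm v i
        show (b₁ + c₁) i - (c₂ i - ((p : ℕ) • v) i) = b₂ i
        have h3 : (b₁ + c₁) i = b₁ i + c₁ i := rfl
        rw [h2, h3]
        omega
      simp only [this]
      exact mem_sphB.mp hb₂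
    have hcc : c₁ = c₂ - (p : ℕ) • v := e₁.trans e₂.symm
    have hb : b₁ = b₂ := by
      funext i
      have h1 := hpv i
      have h2 := congrFun hcc i
      have h3 : c₁ i = c₂ i - ((p : ℕ) • v) i := h2
      rw [hsm v i] at h3
      omega
    refine ⟨hb, ?_⟩
    funext i
    have h2 := congrFun hcc i
    have h3 : c₁ i = c₂ i - ((p : ℕ) • v) i := h2
    rw [hsm v i] at h3
    show ((c₁ i : ℤ) : ZMod p) = ((c₂ i : ℤ) : ZMod p)
    rw [ZMod.intCast_eq_intCast_iff]
    have : c₂ i - c₁ i = (p : ℤ) * v i := by omega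
    exact Int.modEq_iff_dvd.mpr ⟨v i, this⟩
  -- images
  set Bb : Finset (Fin n → ZMod p) := (sphB n e).image π with hBb
  set Cb : Finset (Fin n → ZMod p) := Finset.univ.filter (fun g => ∃ c ∈ C, π c = g) with hCb
  have hmemCb : ∀ g, g ∈ Cb ↔ ∃ c ∈ C, π c = g := by
    intro g; rw [hCb]; simp
  have hmemBb : ∀ g, g ∈ Bb ↔ ∃ b ∈ sphB n e, π b = g := by
    intro g; rw [hBb]; simp [Finset.mem_image]
  have hBbcard : Bb.card = p := by
    rw [hBb, Finset.card_image_of_injOn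
      (fun b hb b' hb' h => hinjB b (Finset.mem_coe.mp hb) b' (Finset.mem_coe.mp hb') h),
      sphB_card hcard]
  -- the key bijection
  have hkey : ∀ F : (Fin n → ZMod p) → ℂ,
      ∑ bc ∈ Bb ×ˢ Cb, F (bc.1 + bc.2) = ∑ g : Fin n → ZMod p, F g := by
    intro F
    apply Finset.sum_bij (fun bc _ => bc.1 + bc.2)
    · intro bc _; exact Finset.mem_univ _
    · intro bc₁ hbc₁ bc₂ hbc₂ hsum
      obtain ⟨hB₁, hC₁⟩ := Finset.mem_product.mp hbc₁
      obtain ⟨hB₂, hC₂⟩ := Finset.mem_product.mp hbc₂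
      obtain ⟨b₁, hb₁, hpb₁⟩ := (hmemBb _).mp hB₁
      obtain ⟨b₂, hb₂, hpb₂⟩ := (hmemBb _).mp hB₂
      obtain ⟨c₁, hc₁, hpc₁⟩ := (hmemCb _).mp hC₁
      obtain ⟨c₂, hc₂, hpc₂⟩ := (hmemCb _).mp hC₂
      have hsum' : π b₁ + π c₁ = π b₂ + π c₂ := by
        rw [hpb₁, hpc₁, hpb₂, hpc₂]; exact hsum
      obtain ⟨hb, hc⟩ := huniq b₁ hb₁ b₂ hb₂ c₁ hc₁ c₂ hc₂ hsum'
      have h1 : bc₁.1 = bc₂.1 := by rw [← hpb₁, ← hpb₂, hb]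
      have h2 : bc₁.2 = bc₂.2 := by rw [← hpc₁, ← hpc₂, hc]
      exact Prod.ext h1 h2
    · intro g _
      obtain ⟨b, hb, c, hc, hbc⟩ := hex g
      exact ⟨(π b, π c), Finset.mem_product.mpr
        ⟨(hmemBb _).mpr ⟨b, hb, rfl⟩, (hmemCb _).mpr ⟨c, hc, rfl⟩⟩, hbc⟩
    · intro bc _; rfl
  have hcard2 : p * Cb.card = p ^ n := by
    have h1 : (Bb ×ˢ Cb).card = Fintype.card (Fin n → ZMod p) := by
      rw [← Finset.card_univ]
      apply Finset.card_bij (fun bc _ => bc.1 + bc.2)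
      · intro bc _; exact Finset.mem_univ _
      · intro bc₁ hbc₁ bc₂ hbc₂ hsum
        obtain ⟨hB₁, hC₁⟩ := Finset.mem_product.mp hbc₁
        obtain ⟨hB₂, hC₂⟩ := Finset.mem_product.mp hbc₂
        obtain ⟨b₁, hb₁, hpb₁⟩ := (hmemBb _).mp hB₁
        obtain ⟨b₂, hb₂, hpb₂⟩ := (hmemBb _).mp hB₂
        obtain ⟨c₁, hc₁, hpc₁⟩ := (hmemCb _).mp hC₁
        obtain ⟨c₂, hc₂, hpc₂⟩ := (hmemCb _).mp hC₂
        have hsum' : π b₁ + π c₁ = π b₂ + π c₂ := by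
          rw [hpb₁, hpc₁, hpb₂, hpc₂]; exact hsum
        obtain ⟨hb, hc⟩ := huniq b₁ hb₁ b₂ hb₂ c₁ hc₁ c₂ hc₂ hsum'
        have h1 : bc₁.1 = bc₂.1 := by rw [← hpb₁, ← hpb₂, hb]
        have h2 : bc₁.2 = bc₂.2 := by rw [← hpc₁, ← hpc₂, hc]
        exact Prod.ext h1 h2
      · intro g _
        obtain ⟨b, hb, c, hc, hbc⟩ := hex g
        exact ⟨(π b, π c), Finset.mem_product.mpr
          ⟨(hmemBb _).mpr ⟨b, hb, rfl⟩, (hmemCb _).mpr ⟨c, hc, rfl⟩⟩, hbc⟩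
    rw [Finset.card_product, hBbcard] at h1
    rw [h1, Fintype.card_fun, ZMod.card, Fintype.card_fin]
  -- character setup
  set ζ : ℂ := Complex.exp (2 * Real.pi * Complex.I / p) with hζdef
  have hζ : IsPrimitiveRoot ζ p := Complex.isPrimitiveRoot_exp p hp.pos.ne'
  set ψ : AddChar (ZMod p) ℂ := AddChar.zmodChar p hζ.pow_eq_one with hψdef
  have hψval : ∀ t : ZMod p, ψ t = ζ ^ t.val := by
    intro t
    rw [hψdef, AddChar.zmodChar_apply]
  have hψ0 : ∑ t : ZMod p, ψ t = 0 := sum_char_zero hp hζ ψ hψval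
  have hprodzero : ∀ a : Fin n → ZMod p, a ≠ 0 →
      (∑ b ∈ Bb, ψ (dotp a b)) * (∑ c ∈ Cb, ψ (dotp a c)) = 0 := by
    intro a ha
    rw [Finset.sum_mul_sum, ← Finset.sum_product']
    have hco : ∀ bc ∈ Bb ×ˢ Cb,
        ψ (dotp a bc.1) * ψ (dotp a bc.2) = ψ (dotp a (bc.1 + bc.2)) := by
      intro bc _
      rw [dotp_add_right, AddChar.map_add_eq_mul]
    rw [Finset.sum_congr rfl hco, hkey (fun g => ψ (dotp a g))]
    exact sum_char_dot hp ψ hψ0 ha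
  by_cases hA : ∃ a : Fin n → ZMod p, a ≠ 0 ∧ (∑ b ∈ Bb, ψ (dotp a b)) = 0
  · -- there is a linear functional separating the sphere
    obtain ⟨a, ha0, haSB⟩ := hA
    set N : ZMod p → ℕ := fun t => (Bb.filter (fun b => dotp a b = t)).card with hNdef
    have hNsum : ∑ t, N t = p := by
      exact (Finset.card_eq_sum_card_fiberwise
        (fun b (_ : b ∈ Bb) => Finset.mem_univ (dotp a b))).symm.trans hBbcard
    have hNzero : ∑ t : ZMod p, (N t : ℂ) * ζ ^ t.val = 0 := by
      rw [← haSB]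
      rw [← Finset.sum_fiberwise_of_maps_to (fun b _ => Finset.mem_univ (dotp a b))
        (fun b => ψ (dotp a b))]
      apply Finset.sum_congr rfl
      intro t _
      rw [hNdef]
      rw [Finset.sum_congr rfl (fun b hb => by
        rw [hψval, (Finset.mem_filter.mp hb).2])]
      rw [Finset.sum_const, nsmul_eq_mul]
    have hone : ∀ t, N t = 1 := counts_eq_one hp hζ N hNsum hNzero
    -- the subgroup
    set ℓ : (Fin n → ℤ) →+ ZMod p :=
      { toFun := fun x => dotp a (π x)
        map_zero' := by simp [dotp, hπ]
        map_add' := by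
          intro x y
          show dotp a (π (x + y)) = dotp a (π x) + dotp a (π y)
          rw [hπadd, dotp_add_right] } with hℓ
    refine ⟨ℓ.ker, ?_⟩
    intro x
    have hfib := hone (dotp a (π x))
    rw [hNdef] at hfib
    obtain ⟨bb, hbb⟩ := Finset.card_eq_one.mp hfib
    have hbbmem : bb ∈ Bb.filter (fun b => dotp a b = dotp a (π x)) :=
      hbb ▸ Finset.mem_singleton_self bb
    obtain ⟨hbbB, hbbdot⟩ := Finset.mem_filter.mp hbbmem
    obtain ⟨b, hbB, hbπ⟩ := (hmemBb _).mp hbbB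
    refine ⟨x - b, ⟨?_, ?_⟩, ?_⟩
    · show x - b ∈ (ℓ.ker : Set (Fin n → ℤ))
      rw [SetLike.mem_coe, AddMonoidHom.mem_ker, map_sub]
      have h1 : ℓ b = dotp a (π x) := by
        show dotp a (π b) = dotp a (π x)
        rw [hbπ]; exact hbbdot
      have h2 : ℓ x = dotp a (π x) := rfl
      rw [h1, h2, sub_self]
    · have : ∀ i, x i - (x - b) i = b i := fun i => by simp
      simp only [this]
      exact mem_sphB.mp hbB
    · rintro c' ⟨hc'ker, hc'd⟩
      have hb'B : x - c' ∈ sphB n e := by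
        rw [mem_sphB]
        have : ∀ i, (x - c') i = x i - c' i := fun i => rfl
        simp only [this]
        exact hc'd
      have h0 : ℓ c' = 0 := by
        rw [SetLike.mem_coe, AddMonoidHom.mem_ker] at hc'ker
        exact hc'ker
      have hdot' : dotp a (π (x - c')) = dotp a (π x) := by
        have h1 : ℓ (x - c') = ℓ x - ℓ c' := map_sub ℓ x c'
        rw [h0, sub_zero] at h1
        exact h1
      have hmem' : π (x - c') ∈ Bb.filter (fun b => dotp a b = dotp a (π x)) :=
        Finset.mem_filter.mpr ⟨(hmemBb _).mpr ⟨x - c', hb'B, rfl⟩, hdot'⟩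
      rw [hbb, Finset.mem_singleton] at hmem'
      have hxc : x - c' = b := hinjB _ hb'B _ hbB (hmem'.trans hbπ.symm)
      have h2 : x - (x - c') = x - b := by rw [hxc]
      rw [sub_sub_cancel] at h2
      exact h2
  · -- contradiction case
    exfalso
    push_neg at hA
    have hSCzero : ∀ a : Fin n → ZMod p, a ≠ 0 → (∑ c ∈ Cb, ψ (dotp a c)) = 0 := by
      intro a ha
      rcases mul_eq_zero.mp (hprodzero a ha) with h | h
      · exact absurd h (hA a ha)
      · exact h
    have hCbcard : Cb.card < Fintype.card (Fin n → ZMod p) := by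
      have hcardG : Fintype.card (Fin n → ZMod p) = p ^ n := by
        rw [Fintype.card_fun, ZMod.card, Fintype.card_fin]
      have hp2 := hp.two_le
      have : Cb.card = p ^ (n - 1) := by
        have hpn : p ^ n = p * p ^ (n - 1) := by
          conv_lhs => rw [show n = 1 + (n - 1) by omega]
          rw [pow_add, pow_one]
        have := hcard2
        rw [hpn] at this
        exact Nat.eq_of_mul_eq_mul_left hp.pos this.symm ▸ rfl
      rw [this, hcardG]
      apply Nat.pow_lt_pow_right hp.one_lt
      omega
    obtain ⟨g0, hg0⟩ : ∃ g, g ∉ Cb := by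
      by_contra h
      push_neg at h
      have : (Finset.univ : Finset (Fin n → ZMod p)) ⊆ Cb := fun g _ => h g
      have := Finset.card_le_card this
      rw [Finset.card_univ] at this
      omega
    have hdsym : ∀ (u w : Fin n → ZMod p), dotp u w = dotp w u := by
      intro u w
      exact Finset.sum_congr rfl (fun i _ => mul_comm _ _)
    have hT1 : ∑ a : Fin n → ZMod p, ∑ c ∈ Cb, ψ (dotp a (c - g0)) = 0 := by
      rw [Finset.sum_comm]
      apply Finset.sum_eq_zero
      intro c hc
      have hne : c - g0 ≠ 0 := sub_ne_zero.mpr (fun h => hg0 (h ▸ hc))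
      rw [Finset.sum_congr rfl (fun a _ => by rw [hdsym a (c - g0)])]
      exact sum_char_dot hp ψ hψ0 hne
    have hT2 : ∑ a : Fin n → ZMod p, ∑ c ∈ Cb, ψ (dotp a (c - g0)) = (Cb.card : ℂ) := by
      have hsplit : ∀ (a c : Fin n → ZMod p), ψ (dotp a (c - g0))
          = ψ (dotp a c) * ψ (dotp a (-g0)) := by
        intro a c
        have h1 : c - g0 = c + (-g0) := sub_eq_add_neg c g0
        rw [h1, dotp_add_right, AddChar.map_add_eq_mul]
      have h2 : ∀ a : Fin n → ZMod p, (∑ c ∈ Cb, ψ (dotp a (c - g0)))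
          = (∑ c ∈ Cb, ψ (dotp a c)) * ψ (dotp a (-g0)) := by
        intro a
        rw [Finset.sum_mul]
        exact Finset.sum_congr rfl (fun c _ => hsplit a c)
      rw [Finset.sum_congr rfl (fun a _ => h2 a)]
      rw [Finset.sum_eq_single 0]
      · have hd0 : dotp (0 : Fin n → ZMod p) (-g0) = 0 := by
          simp [dotp]
        have hd0' : ∀ c : Fin n → ZMod p, dotp 0 c = 0 := by
          intro c; simp [dotp]
        rw [hd0, AddChar.map_zero_eq_one, mul_one]
        rw [Finset.sum_congr rfl (fun c _ => by rw [hd0' c, AddChar.map_zero_eq_one])]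
        rw [Finset.sum_const, nsmul_eq_mul, mul_one]
      · intro a _ ha
        rw [hSCzero a ha, zero_mul]
      · intro h
        exact absurd (Finset.mem_univ 0) h
    rw [hT1] at hT2
    have hCbne : Cb.Nonempty := by
      obtain ⟨c, ⟨hc, -⟩, -⟩ := hC 0
      exact ⟨π c, (hmemCb _).mpr ⟨c, hc, rfl⟩⟩
    have : (Cb.card : ℂ) ≠ 0 := Nat.cast_ne_zero.mpr (Finset.card_ne_zero_of_mem hCbne.choose_spec)
    exact this hT2.symm

end

end PLAux

/-- If `|S(n,e)| = p` is prime, then every `PL(n,e)`-code is `p`-periodic in every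
coordinate direction, and a `PL(n,e)`-code exists iff a linear one (a subgroup of `ℤ^n`)
exists. -/
theorem prime_sphere_PL_code (n e p : ℕ) (hn : 1 ≤ n) (he : 1 ≤ e) (hp : p.Prime)
    (hcard : (LeeSphere n e).ncard = p) :
    (∀ C : Set (Fin n → ℤ), IsPLCode n e C →
        ∀ i : Fin n, ∀ x : Fin n → ℤ, x ∈ C ↔ x + Pi.single i (p : ℤ) ∈ C) ∧
      ((∃ C : Set (Fin n → ℤ), IsPLCode n e C) ↔
        ∃ C : Set (Fin n → ℤ), IsPLCode n e C ∧
          ∃ H : AddSubgroup (Fin n → ℤ), C = (H : Set (Fin n → ℤ))) := by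
  constructor
  · intro C hC i x
    exact PLAux.periodic_single he hp hcard hC i x
  · constructor
    · rintro ⟨C, hC⟩
      obtain ⟨H, hH⟩ := PLAux.exists_linear hn he hp hcard hC
      exact ⟨(H : Set (Fin n → ℤ)), hH, H, rfl⟩
    · rintro ⟨C, hC, -⟩
      exact ⟨C, hC⟩
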